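/- Let (C,R) be a directed graph with ℓ = t = 1 that is not strongly connected and has |C'| = 1, and let j_1, j_2 ∈ C'' be such that j_1 ∈ W(j_2). Then W(j_1) ⊆ W(j_2). -/

import Mathlib

open Finset

/-- Reachability (existence of a directed walk) in the directed graph with arc set `R`. -/
def Reach {c : ℕ} (R : Finset (Fin c × Fin c)) (a b : Fin c) : Prop :=
  Relation.ReflTransGen (fun x y => (x, y) ∈ R) a b

/-- `p` is a directed path in the graph with arc set `R`. -/
def IsDipath {c : ℕ} (R : Finset (Fin c × Fin c)) (p : List (Fin c)) : Prop :=
  p ≠ [] ∧ p.Nodup ∧ p.Chain' (fun a b => (a, b) ∈ R)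

/-- `p` is a directed path from `a` to `b` in the graph with arc set `R`. -/
def IsDipathFromTo {c : ℕ} (R : Finset (Fin c × Fin c)) (p : List (Fin c))
    (a b : Fin c) : Prop :=
  IsDipath R p ∧ p.head? = some a ∧ p.getLast? = some b

/-- There is a directed path from `a` to `b` all of whose intermediate steps stay in `S`
(for `a ∈ S` this says that there is a directed path from `a` to `b` with vertex set
contained in `S`). -/
def ReachIn {c : ℕ} (R : Finset (Fin c × Fin c)) (S : Finset (Fin c))
    (a b : Fin c) : Prop :=
  Relation.ReflTransGen (fun x y => (x, y) ∈ R ∧ x ∈ S ∧ y ∈ S) a b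

/-- The set of arcs of `R` entering the vertex set `U`. -/
def arcsIn {c : ℕ} (R : Finset (Fin c × Fin c)) (U : Finset (Fin c)) :
    Finset (Fin c × Fin c) :=
  R.filter (fun a => a.1 ∉ U ∧ a.2 ∈ U)

/-- The set of arcs of `R` leaving the vertex set `U`. -/
def arcsOut {c : ℕ} (R : Finset (Fin c × Fin c)) (U : Finset (Fin c)) :
    Finset (Fin c × Fin c) :=
  R.filter (fun a => a.1 ∈ U ∧ a.2 ∉ U)

/-- For a graph whose unique absorbing strong component is `{r}` (so `C'' = C \ {r}`),
`Uset R r i = U(i) = {k ∈ C : every directed path from k to r traverses i}`. -/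
noncomputable def Uset {c : ℕ} (R : Finset (Fin c × Fin c)) (r i : Fin c) :
    Finset (Fin c) :=
  @Finset.filter _ (fun k => ∀ p : List (Fin c), IsDipathFromTo R p k r → i ∈ p)
    (Classical.decPred _) Finset.univ

/-- `U ∈ C''_{j-inarb}`: `U ⊆ C'' = C \ {r}`, every vertex of `U` has a directed path to
`j` with vertex set contained in `U`, and every vertex of `C'' \ U` has a directed path
to `C' = {r}` with vertex set contained in `C \ U`. -/
def Jinarb {c : ℕ} (R : Finset (Fin c × Fin c)) (r j : Fin c)
    (U : Finset (Fin c)) : Prop :=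
  U ⊆ Finset.univ.erase r ∧
    (∀ i' ∈ U, ReachIn R U i' j) ∧
    (∀ i' ∈ Finset.univ.erase r \ U, ReachIn R (Finset.univ \ U) i' r)

/-- The vertex set of the strong component of the graph containing `j`. -/
noncomputable def SCC {c : ℕ} (R : Finset (Fin c × Fin c)) (j : Fin c) :
    Finset (Fin c) :=
  @Finset.filter _ (fun k => Reach R j k ∧ Reach R k j) (Classical.decPred _) Finset.univ

/-- `I` is a subset of `C'' = C \ {r}` such that the sets `U(i)`, `i ∈ I`, are pairwise
disjoint with union `U`. -/
def IsPartitionInto {c : ℕ} (R : Finset (Fin c × Fin c)) (r : Fin c)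
    (U I : Finset (Fin c)) : Prop :=
  I ⊆ Finset.univ.erase r ∧
    (↑I : Set (Fin c)).PairwiseDisjoint (fun i => Uset R r i) ∧
    U = I.biUnion (Uset R r)

/-- `W(j) = ⋃_{U ∈ C''_{j-inarb}} I_U`, where `I_U` is the unique subset of `C''` with
`U = ⋃*_{i ∈ I_U} U(i)` (pairwise disjoint union). -/
def Wset {c : ℕ} (R : Finset (Fin c × Fin c)) (r j : Fin c) : Set (Fin c) :=
  {i | ∃ U I : Finset (Fin c), Jinarb R r j U ∧ IsPartitionInto R r U I ∧ i ∈ I}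

/-- `U(C''(j)) = {k ∈ C'' : every directed path from k to r traverses C''(j)}`. -/
noncomputable def UsetSC {c : ℕ} (R : Finset (Fin c × Fin c)) (r j : Fin c) :
    Finset (Fin c) :=
  @Finset.filter _
    (fun k => ∀ p : List (Fin c), IsDipathFromTo R p k r → ∃ x ∈ p, x ∈ SCC R j)
    (Classical.decPred _) (Finset.univ.erase r)

section Aux

variable {c : ℕ} {R : Finset (Fin c × Fin c)} {r : Fin c}

lemma mem_Uset {x k : Fin c} :
    k ∈ Uset R r x ↔ ∀ p : List (Fin c), IsDipathFromTo R p k r → x ∈ p := by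
  simp only [Uset, Finset.mem_filter, Finset.mem_univ, true_and]

lemma self_mem_Uset (i : Fin c) : i ∈ Uset R r i := by
  rw [mem_Uset]
  intro p hp
  exact List.mem_of_mem_head? (by rw [hp.2.1]; rfl)

lemma r_mem_Uset {x : Fin c} (hrx : r ∈ Uset R r x) : x = r := by
  have h := mem_Uset.mp hrx [r] ⟨⟨by simp, by simp, List.isChain_singleton _⟩, by simp, by simp⟩
  simpa using h

lemma dipath_suffix {p : List (Fin c)} {a b x : Fin c}
    (hp : IsDipathFromTo R p a b) (hx : x ∈ p) :
    ∃ q, IsDipathFromTo R q x b ∧ (∀ v ∈ q, v ∈ p) ∧ (x ≠ a → a ∉ q) := by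
  obtain ⟨s, t, rfl⟩ := List.append_of_mem hx
  obtain ⟨⟨hne, hnd, hch⟩, hhead, hlast⟩ := hp
  refine ⟨x :: t, ⟨⟨by simp, (List.nodup_append'.mp hnd).2.1,
    (List.isChain_append.mp hch).2.1⟩, by simp, ?_⟩, ?_, ?_⟩
  · rw [← hlast, List.getLast?_append_cons]
  · intro v hv
    simp only [List.mem_append]
    exact Or.inr hv
  · intro hxa hmem
    cases s with
    | nil =>
      simp only [List.nil_append, List.head?_cons, Option.some.injEq] at hhead
      exact hxa hhead
    | cons a' s' =>
      have ha : a' = a := by simpa using hhead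
      subst ha
      exact (List.nodup_append'.mp hnd).2.2 List.mem_cons_self hmem

lemma cons_dipath {p : List (Fin c)} {v b a : Fin c} (hp : IsDipathFromTo R p v b)
    (harc : (a, v) ∈ R) (hap : a ∉ p) : IsDipathFromTo R (a :: p) a b := by
  obtain ⟨⟨hne, hnd, hch⟩, hhead, hlast⟩ := hp
  cases p with
  | nil => exact absurd rfl hne
  | cons x t =>
    have hxv : x = v := by simpa using hhead
    subst hxv
    refine ⟨⟨by simp, List.nodup_cons.mpr ⟨hap, hnd⟩,
      List.isChain_cons_cons.mpr ⟨harc, hch⟩⟩, by simp, ?_⟩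
    rw [List.getLast?_cons_cons]
    exact hlast

lemma reachIn_of_path {S : Finset (Fin c)} :
    ∀ {p : List (Fin c)} {a b : Fin c}, IsDipathFromTo R p a b →
      (∀ v ∈ p, v ∈ S) → ReachIn R S a b := by
  intro p
  induction p with
  | nil => intro a b hp _; exact absurd rfl hp.1.1
  | cons hd tl ih =>
    intro a b hp hS
    have hhd : hd = a := by simpa using hp.2.1
    subst hhd
    cases tl with
    | nil =>
      have hb : hd = b := by simpa using hp.2.2
      subst hb
      exact Relation.ReflTransGen.refl
    | cons hd2 tl2 =>
      have hch := List.isChain_cons_cons.mp hp.1.2.2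
      have hp2 : IsDipathFromTo R (hd2 :: tl2) hd2 b :=
        ⟨⟨by simp, hp.1.2.1.of_cons, hch.2⟩, by simp,
          by rw [← hp.2.2, List.getLast?_cons_cons]⟩
      exact Relation.ReflTransGen.head
        ⟨hch.1, hS _ (by simp), hS _ (by simp)⟩
        (ih hp2 (fun v hv => hS v (by simp [hv])))

lemma path_of_reachIn {S : Finset (Fin c)} {a b : Fin c}
    (h : ReachIn R S a b) (hab : a ≠ b) :
    ∃ p, IsDipathFromTo R p a b ∧ ∀ v ∈ p, v ∈ S := by
  induction h using Relation.ReflTransGen.head_induction_on with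
  | refl => exact absurd rfl hab
  | @head a' mid hstep hrest ih =>
    by_cases hcb : mid = b
    · subst hcb
      have hpb : IsDipathFromTo R [mid] mid mid := ⟨⟨by simp, by simp, List.isChain_singleton _⟩, by simp, by simp⟩
      refine ⟨[a', mid], cons_dipath hpb hstep.1 (by simp [hab]), ?_⟩
      intro v hv
      rcases List.mem_cons.mp hv with rfl | hv'
      · exact hstep.2.1
      · simp only [List.mem_singleton] at hv'
        subst hv'
        exact hstep.2.2
    · obtain ⟨p, hp, hpS⟩ := ih hcb
      by_cases hap : a' ∈ p
      · obtain ⟨q, hq, hsub, _⟩ := dipath_suffix hp hap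
        exact ⟨q, hq, fun v hv => hpS v (hsub v hv)⟩
      · refine ⟨a' :: p, cons_dipath hp hstep.1 hap, ?_⟩
        intro v hv
        rcases List.mem_cons.mp hv with rfl | hv'
        · exact hstep.2.1
        · exact hpS v hv'

end Aux

section Aux2
variable {c : ℕ} {R : Finset (Fin c × Fin c)} {r : Fin c}

lemma step_mem_Uset {k x v : Fin c} (hk : k ∈ Uset R r x) (hkx : k ≠ x)
    (harc : (k, v) ∈ R) : v ∈ Uset R r x := by
  by_contra hv
  rw [mem_Uset] at hv
  push_neg at hv
  obtain ⟨p, hp, hxp⟩ := hv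
  by_cases hkp : k ∈ p
  · obtain ⟨q, hq, hsub, _⟩ := dipath_suffix hp hkp
    exact hxp (hsub x (mem_Uset.mp hk q hq))
  · have hq := cons_dipath hp harc hkp
    have hx : x ∈ k :: p := mem_Uset.mp hk (k :: p) hq
    rcases List.mem_cons.mp hx with rfl | hx'
    · exact hkx rfl
    · exact hxp hx'

lemma reachIn_mono {S T : Finset (Fin c)} (hST : ∀ x ∈ S, x ∈ T) {a b : Fin c}
    (h : ReachIn R S a b) : ReachIn R T a b :=
  Relation.ReflTransGen.mono (r := fun x y => (x, y) ∈ R ∧ x ∈ S ∧ y ∈ S)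
    (p := fun x y => (x, y) ∈ R ∧ x ∈ T ∧ y ∈ T)
    (fun x y hxy => ⟨hxy.1, hST x hxy.2.1, hST y hxy.2.2⟩) a b h

lemma reachIn_univ_of_reach {k b : Fin c} (h : Reach R k b) :
    ReachIn R Finset.univ k b :=
  Relation.ReflTransGen.mono (r := fun x y => (x, y) ∈ R)
    (p := fun x y => (x, y) ∈ R ∧ x ∈ Finset.univ ∧ y ∈ Finset.univ)
    (fun x y hxy => ⟨hxy, Finset.mem_univ x, Finset.mem_univ y⟩) k b h

lemma right_mem_of_reachIn {S : Finset (Fin c)} {a b : Fin c}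
    (h : ReachIn R S a b) (hab : a ≠ b) : b ∈ S := by
  rcases h.cases_tail with heq | ⟨m, _, hs⟩
  · exact absurd heq.symm hab
  · exact hs.2.2

lemma reach_avoid_of_not_mem_Uset {k x : Fin c} (h : k ∉ Uset R r x) :
    ReachIn R (Finset.univ \ {x}) k r := by
  rw [mem_Uset] at h
  push_neg at h
  obtain ⟨p, hp, hxp⟩ := h
  refine reachIn_of_path hp (fun v hv => Finset.mem_sdiff.mpr ⟨Finset.mem_univ _, ?_⟩)
  simp only [Finset.mem_singleton]
  rintro rfl
  exact hxp hv

lemma not_mem_Uset_of_reach_avoid {S : Finset (Fin c)} {k x : Fin c} (hxr : x ≠ r)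
    (hxS : x ∉ S) (h : ReachIn R S k r) : k ∉ Uset R r x := by
  by_cases hkr : k = r
  · subst hkr
    intro hr
    exact hxr (r_mem_Uset hr)
  · obtain ⟨p, hp, hpS⟩ := path_of_reachIn h hkr
    intro hk
    exact hxS (hpS x (mem_Uset.mp hk p hp))

lemma mem_Uset_of_reachIn_avoid {S : Finset (Fin c)} {k b x : Fin c}
    (h : ReachIn R S k b) (hk : k ∈ Uset R r x) (hxS : x ∉ S) : b ∈ Uset R r x := by
  revert hk
  induction h using Relation.ReflTransGen.head_induction_on with
  | refl => exact id
  | @head a v hstep hrest ih =>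
    intro hk
    exact ih (step_mem_Uset hk (by rintro rfl; exact hxS hstep.2.1) hstep.1)

lemma reachIn_split {S : Finset (Fin c)} {k b x : Fin c} (h : ReachIn R S k b)
    (hk : k ∈ Uset R r x) (hb : b ∉ Uset R r x) :
    ReachIn R (S ∩ Uset R r x) k x ∧ ReachIn R S x b := by
  revert hk
  induction h using Relation.ReflTransGen.head_induction_on with
  | refl => intro hk; exact absurd hk hb
  | @head a v hstep hrest ih =>
    intro hk
    by_cases hkx : a = x
    · subst hkx
      exact ⟨Relation.ReflTransGen.refl, Relation.ReflTransGen.head hstep hrest⟩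
    · have hv := step_mem_Uset hk hkx hstep.1
      obtain ⟨w1, w2⟩ := ih hv
      exact ⟨Relation.ReflTransGen.head
        ⟨hstep.1, Finset.mem_inter.mpr ⟨hstep.2.1, hk⟩,
         Finset.mem_inter.mpr ⟨hstep.2.2, hv⟩⟩ w1, w2⟩

lemma Uset_trans {k x m : Fin c} (hk : k ∈ Uset R r x)
    (hx : x ∈ Uset R r m) (hxr : x ≠ r) (hmr : m ≠ r) : k ∈ Uset R r m := by
  by_cases hkm : k ∈ Uset R r m
  · exact hkm
  exfalso
  have w := reach_avoid_of_not_mem_Uset hkm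
  have hrx : r ∉ Uset R r x := fun hh => hxr (r_mem_Uset hh)
  obtain ⟨-, w2⟩ := reachIn_split w hk hrx
  exact not_mem_Uset_of_reach_avoid hmr (by simp) w2 hx

lemma Uset_antisymm (hreach : ∀ k : Fin c, Reach R k r) {x i : Fin c}
    (h1 : x ∈ Uset R r i) (h2 : i ∈ Uset R r x) : x = i := by
  by_cases hir : i = r
  · subst hir
    exact r_mem_Uset h2
  by_contra hxi
  obtain ⟨p, hp, -⟩ := path_of_reachIn (reachIn_univ_of_reach (hreach i)) hir
  have hxp : x ∈ p := mem_Uset.mp h2 p hp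
  obtain ⟨q, hq, -, haq⟩ := dipath_suffix hp hxp
  exact haq hxi (mem_Uset.mp h1 q hq)

lemma Uset_laminar (hreach : ∀ k : Fin c, Reach R k r) {k m m' : Fin c}
    (h1 : k ∈ Uset R r m) (h2 : k ∈ Uset R r m') (hmr : m ≠ r) (hm'r : m' ≠ r) :
    m ∈ Uset R r m' ∨ m' ∈ Uset R r m := by
  by_contra hcon
  push_neg at hcon
  obtain ⟨hA, hB⟩ := hcon
  have hrm : r ∉ Uset R r m := fun hh => hmr (r_mem_Uset hh)
  obtain ⟨w1, -⟩ := reachIn_split (reachIn_univ_of_reach (hreach k)) h1 hrm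
  have w1' : ReachIn R (Finset.univ \ {m'}) k m := by
    refine reachIn_mono (fun z hz => Finset.mem_sdiff.mpr ⟨Finset.mem_univ _, ?_⟩) w1
    simp only [Finset.mem_singleton]
    rintro rfl
    exact hB (Finset.mem_inter.mp hz).2
  have w2 : ReachIn R (Finset.univ \ {m'}) m r := reach_avoid_of_not_mem_Uset hA
  exact not_mem_Uset_of_reach_avoid hm'r (by simp) (w1'.trans w2) h2

end Aux2

section Aux3
variable {c : ℕ} {R : Finset (Fin c × Fin c)} {r : Fin c}

noncomputable def Sset (R : Finset (Fin c × Fin c)) (r i : Fin c) : Finset (Fin c) :=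
  @Finset.filter _ (fun x => i ∈ Uset R r x → x = i) (Classical.decPred _) Finset.univ

lemma mem_Sset {i x : Fin c} : x ∈ Sset R r i ↔ (i ∈ Uset R r x → x = i) := by
  simp only [Sset, Finset.mem_filter, Finset.mem_univ, true_and]

lemma r_not_mem_Sset {i : Fin c} (hir : i ≠ r) : r ∉ Sset R r i := by
  rw [mem_Sset]
  intro hcon
  refine hir (hcon ?_).symm
  rw [mem_Uset]
  intro p hp
  exact List.mem_of_mem_getLast? (by rw [hp.2.2]; rfl)

lemma reach_of_mem_Wset (hreach : ∀ k : Fin c, Reach R k r) {i j : Fin c}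
    (hi : i ∈ Wset R r j) : i ≠ r ∧ ReachIn R (Sset R r i) i j := by
  obtain ⟨U, I, hJ, hP, hiI⟩ := hi
  have hIr : I ⊆ Finset.univ.erase r := hP.1
  have hir : i ≠ r := (Finset.mem_erase.mp (hIr hiI)).1
  have hiU : i ∈ U := by
    rw [hP.2.2]
    exact Finset.mem_biUnion.mpr ⟨i, hiI, self_mem_Uset i⟩
  have hUS : ∀ x ∈ U, x ∈ Sset R r i := by
    intro x hxU
    rw [mem_Sset]
    intro hiUx
    have hxU' := hxU
    rw [hP.2.2] at hxU'
    obtain ⟨m, hmI, hxm⟩ := Finset.mem_biUnion.mp hxU'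
    have hxr : x ≠ r := (Finset.mem_erase.mp (hJ.1 hxU)).1
    have hmr : m ≠ r := (Finset.mem_erase.mp (hIr hmI)).1
    have him : i ∈ Uset R r m := Uset_trans hiUx hxm hxr hmr
    have hmi : m = i := by
      by_contra hne
      exact Finset.disjoint_left.mp
        (hP.2.1 (Finset.mem_coe.mpr hmI) (Finset.mem_coe.mpr hiI) hne)
        him (self_mem_Uset i)
    rw [hmi] at hxm
    exact Uset_antisymm hreach hxm hiUx
  exact ⟨hir, reachIn_mono hUS (hJ.2.1 i hiU)⟩

end Aux3

section Aux4
variable {c : ℕ} {R : Finset (Fin c × Fin c)} {r : Fin c}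

lemma mem_Wset_of_reach (hreach : ∀ k : Fin c, Reach R k r) {i j : Fin c}
    (hir : i ≠ r) (h : ReachIn R (Sset R r i) i j) : i ∈ Wset R r j := by
  classical
  set SS := Sset R r i with hSSdef
  set B := SS.filter (fun x => ReachIn R SS i x ∧ ReachIn R SS x j) with hBdef
  set U := (Finset.univ.erase r).filter
    (fun k => ¬ ReachIn R (Finset.univ \ B) k r) with hUdef
  have memB : ∀ {x : Fin c}, x ∈ B ↔ x ∈ SS ∧ ReachIn R SS i x ∧ ReachIn R SS x j := by
    intro x
    rw [hBdef, Finset.mem_filter]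
  have memU : ∀ {x : Fin c}, x ∈ U ↔ x ≠ r ∧ ¬ ReachIn R (Finset.univ \ B) x r := by
    intro x
    rw [hUdef, Finset.mem_filter, Finset.mem_erase]
    simp only [Finset.mem_univ, and_true]
  have hrSS : r ∉ SS := r_not_mem_Sset hir
  have hrB : r ∉ B := fun hh => hrSS ((memB.mp hh).1)
  have hrU : r ∉ U := fun hh => (memU.mp hh).1 rfl
  have hBne : ∀ {x : Fin c}, x ∈ B → x ≠ r := fun {x} hh hx => hrB (hx ▸ hh)
  have hBU : B ⊆ U := by
    intro x hx
    refine memU.mpr ⟨hBne hx, fun hw => ?_⟩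
    rcases hw.cases_head with heq | ⟨z, hstep, -⟩
    · exact hBne hx heq
    · exact (Finset.mem_sdiff.mp hstep.2.1).2 hx
  have hnotU : ∀ {y : Fin c}, ReachIn R (Finset.univ \ B) y r → y ∉ U :=
    fun {y} hw hyU => (memU.mp hyU).2 hw
  have hgetU : ∀ {y : Fin c}, y ≠ r → y ∉ U → ReachIn R (Finset.univ \ B) y r := by
    intro y hyr hyU
    by_contra hc
    exact hyU (memU.mpr ⟨hyr, hc⟩)
  have hnotB_of : ∀ {y : Fin c}, y ≠ r → ReachIn R (Finset.univ \ B) y r → y ∉ B := by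
    intro y hyr hw
    rcases hw.cases_head with heq | ⟨z, hstep, -⟩
    · exact absurd heq hyr
    · exact (Finset.mem_sdiff.mp hstep.2.1).2
  have keyB : ∀ x, ReachIn R SS x j → ReachIn R SS i x → ReachIn R B x j := by
    intro x hxj
    induction hxj using Relation.ReflTransGen.head_induction_on with
    | refl => intro _; exact Relation.ReflTransGen.refl
    | @head a v hstep hrest ih =>
      intro hia
      have hib : ReachIn R SS i v := hia.tail hstep
      have haB : a ∈ B := memB.mpr ⟨hstep.2.1, hia, Relation.ReflTransGen.head hstep hrest⟩
      have hbB : v ∈ B := memB.mpr ⟨hstep.2.2, hib, hrest⟩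
      exact Relation.ReflTransGen.head ⟨hstep.1, haB, hbB⟩ (ih hib)
  have condU1 : ∀ k ∈ U, ReachIn R U k j := by
    have aux : ∀ k, Reach R k r → k ∈ U → ∃ z ∈ B, ReachIn R U k z := by
      intro k hk
      induction hk using Relation.ReflTransGen.head_induction_on with
      | refl => intro hrU'; exact absurd hrU' hrU
      | @head a v hstep hrest ih =>
        intro haU
        by_cases haB : a ∈ B
        · exact ⟨a, haB, Relation.ReflTransGen.refl⟩
        · by_cases hvr : v = r
          · subst hvr
            exact absurd (Relation.ReflTransGen.single ⟨hstep,
              Finset.mem_sdiff.mpr ⟨Finset.mem_univ _, haB⟩,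
              Finset.mem_sdiff.mpr ⟨Finset.mem_univ _, hrB⟩⟩) (memU.mp haU).2
          · have hvU : v ∈ U := by
              by_contra hvU
              have hw := hgetU hvr hvU
              have hvB : v ∉ B := hnotB_of hvr hw
              exact (memU.mp haU).2 (Relation.ReflTransGen.head
                ⟨hstep, Finset.mem_sdiff.mpr ⟨Finset.mem_univ _, haB⟩,
                 Finset.mem_sdiff.mpr ⟨Finset.mem_univ _, hvB⟩⟩ hw)
            obtain ⟨z, hz, hw⟩ := ih hvU
            exact ⟨z, hz, Relation.ReflTransGen.head ⟨hstep, haU, hvU⟩ hw⟩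
    intro k hkU
    obtain ⟨z, hzB, hw⟩ := aux k (hreach k) hkU
    have h1 : ReachIn R B z j := keyB z (memB.mp hzB).2.2 (memB.mp hzB).2.1
    exact hw.trans (reachIn_mono (fun x hx => hBU hx) h1)
  have condU2 : ∀ k ∈ Finset.univ.erase r \ U, ReachIn R (Finset.univ \ U) k r := by
    have aux : ∀ y, ReachIn R (Finset.univ \ B) y r → ReachIn R (Finset.univ \ U) y r := by
      intro y hw
      induction hw using Relation.ReflTransGen.head_induction_on with
      | refl => exact Relation.ReflTransGen.refl
      | @head a v hstep hrest ih =>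
        have haU : a ∉ U := hnotU (Relation.ReflTransGen.head hstep hrest)
        have hvU : v ∉ U := hnotU hrest
        exact Relation.ReflTransGen.head ⟨hstep.1,
          Finset.mem_sdiff.mpr ⟨Finset.mem_univ _, haU⟩,
          Finset.mem_sdiff.mpr ⟨Finset.mem_univ _, hvU⟩⟩ ih
    intro k hk
    obtain ⟨hk1, hk2⟩ := Finset.mem_sdiff.mp hk
    exact aux k (hgetU (Finset.mem_erase.mp hk1).1 hk2)
  have hclosure : ∀ x ∈ U, Uset R r x ⊆ U := by
    intro x hxU k hk
    by_contra hkU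
    have hxr : x ≠ r := (memU.mp hxU).1
    have hkr : k ≠ r := fun he => hxr (r_mem_Uset (he ▸ hk))
    have hw := hgetU hkr hkU
    have hrx : r ∉ Uset R r x := fun hh => hxr (r_mem_Uset hh)
    obtain ⟨-, w2⟩ := reachIn_split hw hk hrx
    exact (memU.mp hxU).2 w2
  have hiB : i ∈ B := memB.mpr ⟨mem_Sset.mpr (fun _ => rfl), Relation.ReflTransGen.refl, h⟩
  have hiU : i ∈ U := hBU hiB
  have hmax : ∀ x ∈ U, i ∈ Uset R r x → x = i := by
    intro x hxU hiUx
    by_contra hxi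
    have hxSS : x ∉ SS := fun hh => hxi (mem_Sset.mp hh hiUx)
    have hxr : x ≠ r := (memU.mp hxU).1
    obtain ⟨p, hp, -⟩ := path_of_reachIn (reachIn_univ_of_reach (hreach x)) hxr
    have hpB : ∀ v ∈ p, v ∈ Finset.univ \ B := by
      intro v hv
      refine Finset.mem_sdiff.mpr ⟨Finset.mem_univ _, fun hvB => ?_⟩
      have hvUx : v ∈ Uset R r x := mem_Uset_of_reachIn_avoid (memB.mp hvB).2.1 hiUx hxSS
      have hvx : v ≠ x := fun he => hxSS (he ▸ (memB.mp hvB).1)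
      obtain ⟨q, hq, -, haq⟩ := dipath_suffix hp hv
      exact haq hvx (mem_Uset.mp hvUx q hq)
    exact (memU.mp hxU).2 (reachIn_of_path hp hpB)
  have hpart : ∀ k ∈ U, ∃ m, m ∈ U ∧ (∀ x ∈ U, m ∈ Uset R r x → x = m) ∧ k ∈ Uset R r m := by
    intro k hkU
    set T := U.filter (fun x => k ∈ Uset R r x) with hTdef
    have hkT : k ∈ T := Finset.mem_filter.mpr ⟨hkU, self_mem_Uset k⟩
    obtain ⟨m, hmT, hmax'⟩ := Finset.exists_max_image T (fun x => (Uset R r x).card) ⟨k, hkT⟩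
    obtain ⟨hmU, hkm⟩ := Finset.mem_filter.mp hmT
    refine ⟨m, hmU, ?_, hkm⟩
    intro x hxU hmx
    by_contra hxm
    have hxr : x ≠ r := (memU.mp hxU).1
    have hmr : m ≠ r := (memU.mp hmU).1
    have hsub : Uset R r m ⊆ Uset R r x := fun z hz => Uset_trans hz hmx hmr hxr
    have hxT : x ∈ T := Finset.mem_filter.mpr ⟨hxU, hsub hkm⟩
    have hxnm : x ∉ Uset R r m := fun hh => hxm (Uset_antisymm hreach hh hmx)
    have hcard : (Uset R r m).card < (Uset R r x).card :=
      Finset.card_lt_card ⟨hsub, fun hss => hxnm (hss (self_mem_Uset x))⟩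
    exact absurd (hmax' x hxT) (not_le.mpr hcard)
  set I := U.filter (fun m => ∀ x ∈ U, m ∈ Uset R r x → x = m) with hIdef
  have hUsub : U ⊆ Finset.univ.erase r := Finset.filter_subset _ _
  refine ⟨U, I, ⟨hUsub, condU1, condU2⟩, ⟨?_, ?_, ?_⟩, ?_⟩
  · exact (Finset.filter_subset _ _).trans hUsub
  · intro m hm m' hm' hne
    have hmI := Finset.mem_filter.mp (Finset.mem_coe.mp hm)
    have hm'I := Finset.mem_filter.mp (Finset.mem_coe.mp hm')
    refine Finset.disjoint_left.mpr ?_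
    intro k hk hk'
    rcases Uset_laminar hreach hk hk' (memU.mp hmI.1).1 (memU.mp hm'I.1).1 with hc | hc
    · exact hne (hmI.2 m' hm'I.1 hc).symm
    · exact hne (hm'I.2 m hmI.1 hc)
  · apply Finset.Subset.antisymm
    · intro k hkU
      obtain ⟨m, hmU, hmmax, hkm⟩ := hpart k hkU
      exact Finset.mem_biUnion.mpr ⟨m, Finset.mem_filter.mpr ⟨hmU, hmmax⟩, hkm⟩
    · intro k hk
      obtain ⟨m, hmI, hkm⟩ := Finset.mem_biUnion.mp hk
      exact hclosure m (Finset.mem_filter.mp hmI).1 hkm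
  · exact Finset.mem_filter.mpr ⟨hiU, hmax⟩

end Aux4


theorem stmt15 {c : ℕ}
    (R : Finset (Fin c × Fin c)) (hloop : ∀ v : Fin c, (v, v) ∉ R)
    -- `{r} = C'` is the vertex set of the unique absorbing strong component (`ℓ = t = 1`):
    (r : Fin c)
    (habs : ∀ p ∈ R, p.1 ≠ r)
    (hreach : ∀ k : Fin c, Reach R k r)
    (hweak : ∀ a b : Fin c,
      Relation.ReflTransGen (fun x y => (x, y) ∈ R ∨ (y, x) ∈ R) a b)
    (hnsc : ¬ ∀ a b : Fin c, Reach R a b)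
    (j1 j2 : Fin c) (hj1 : j1 ≠ r) (hj2 : j2 ≠ r)
    (hmem : j1 ∈ Wset R r j2) :
    Wset R r j1 ⊆ Wset R r j2 := by
  intro i hi
  obtain ⟨hir, h1⟩ := reach_of_mem_Wset hreach hi
  obtain ⟨hj1r, h2⟩ := reach_of_mem_Wset hreach hmem
  by_cases hij : i = j1
  · exact hij ▸ hmem
  · have hsub : ∀ x ∈ Sset R r j1, x ∈ Sset R r i := by
      intro x hx
      rw [mem_Sset]
      intro hiUx
      by_contra hxi
      have hxSS : x ∉ Sset R r i := fun hh => hxi (mem_Sset.mp hh hiUx)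
      have hj1Ux : j1 ∈ Uset R r x := mem_Uset_of_reachIn_avoid h1 hiUx hxSS
      have hxj1 : x = j1 := mem_Sset.mp hx hj1Ux
      subst hxj1
      have hxSSi : x ∈ Sset R r i := right_mem_of_reachIn h1 hij
      exact hxi (mem_Sset.mp hxSSi hiUx)
    exact mem_Wset_of_reach hreach hir (h1.trans (reachIn_mono hsub h2))
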